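/- Let u : ℝ → ℝ be continuously differentiable on [0,1] with u(0) = 0. Then ∫₀¹ u(x)⁴ dx ≤ 4 (∫₀¹ u(x)² dx) (∫₀¹ u'(x)² dx). -/

import Mathlib

open Set intervalIntegral MeasureTheory

/-- Cauchy–Schwarz inequality for interval integrals of continuous functions on `[0,1]`. -/
lemma cs_integral_aux (f g : ℝ → ℝ) (hf : ContinuousOn f (Set.Icc 0 1))
    (hg : ContinuousOn g (Set.Icc 0 1)) :
    (∫ x in (0:ℝ)..1, f x * g x) ^ 2 ≤
      (∫ x in (0:ℝ)..1, f x ^ 2) * ∫ x in (0:ℝ)..1, g x ^ 2 := by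
  have h01 : Set.uIcc (0:ℝ) 1 = Set.Icc 0 1 := Set.uIcc_of_le zero_le_one
  have hf2 : IntervalIntegrable (fun x => f x ^ 2) volume 0 1 :=
    ContinuousOn.intervalIntegrable (by rw [h01]; exact hf.pow 2)
  have hg2 : IntervalIntegrable (fun x => g x ^ 2) volume 0 1 :=
    ContinuousOn.intervalIntegrable (by rw [h01]; exact hg.pow 2)
  have hfg : IntervalIntegrable (fun x => f x * g x) volume 0 1 :=
    ContinuousOn.intervalIntegrable (by rw [h01]; exact hf.mul hg)
  set F := ∫ x in (0:ℝ)..1, f x ^ 2 with hF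
  set G := ∫ x in (0:ℝ)..1, g x ^ 2 with hG
  set I := ∫ x in (0:ℝ)..1, f x * g x with hI
  have key : ∀ t : ℝ, 0 ≤ F * (t * t) + (2 * I) * t + G := by
    intro t
    have h0 : (0:ℝ) ≤ ∫ x in (0:ℝ)..1, (t * f x + g x) ^ 2 :=
      intervalIntegral.integral_nonneg zero_le_one (fun x _ => sq_nonneg _)
    have he : (∫ x in (0:ℝ)..1, (t * f x + g x) ^ 2)
        = (t * t) * F + (2 * t) * I + G := by
      have : (∫ x in (0:ℝ)..1, (t * f x + g x) ^ 2)
          = ∫ x in (0:ℝ)..1, ((t * t) * (f x ^ 2) + ((2 * t) * (f x * g x) + g x ^ 2)) :=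
        intervalIntegral.integral_congr (fun x _ => by ring)
      rw [this, intervalIntegral.integral_add (hf2.const_mul _)
          ((hfg.const_mul _).add hg2),
        intervalIntegral.integral_add (hfg.const_mul _) hg2,
        intervalIntegral.integral_const_mul, intervalIntegral.integral_const_mul]
      ring
    rw [he] at h0; linarith
  have hd := discrim_le_zero key
  rw [discrim] at hd
  nlinarith [hd]

/-- If `u` is continuously differentiable on `[0,1]` with `u 0 = 0`,
then `∫₀¹ u⁴ ≤ 4 (∫₀¹ u²)(∫₀¹ u'²)`. -/
theorem integral_fourth_power_bound (u u' : ℝ → ℝ)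
    (hderiv : ∀ x ∈ Set.Icc (0:ℝ) 1, HasDerivWithinAt u (u' x) (Set.Icc (0:ℝ) 1) x)
    (hcont : ContinuousOn u' (Set.Icc (0:ℝ) 1))
    (h0 : u 0 = 0) :
    ∫ x in (0:ℝ)..1, (u x) ^ 4 ≤
      4 * (∫ x in (0:ℝ)..1, (u x) ^ 2) * ∫ x in (0:ℝ)..1, (u' x) ^ 2 := by
  have hu : ContinuousOn u (Set.Icc 0 1) := fun x hx => (hderiv x hx).continuousWithinAt
  have h01 : Set.uIcc (0:ℝ) 1 = Set.Icc 0 1 := Set.uIcc_of_le zero_le_one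
  set A := ∫ x in (0:ℝ)..1, (u x) ^ 2 with hA
  set B := ∫ x in (0:ℝ)..1, (u' x) ^ 2 with hB
  set J := ∫ x in (0:ℝ)..1, |u x| * |u' x| with hJ
  have hJint : IntervalIntegrable (fun x => |u x| * |u' x|) volume 0 1 :=
    ContinuousOn.intervalIntegrable (by rw [h01]; exact hu.abs.mul hcont.abs)
  -- Cauchy–Schwarz for |u|, |u'|
  have hCS : J ^ 2 ≤ A * B := by
    have := cs_integral_aux (fun x => |u x|) (fun x => |u' x|) hu.abs hcont.abs
    simpa [sq_abs] using this
  have hJnonneg : 0 ≤ J :=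
    intervalIntegral.integral_nonneg zero_le_one
      (fun x _ => mul_nonneg (abs_nonneg _) (abs_nonneg _))
  -- pointwise bound : u x ^ 2 ≤ 2 J for x ∈ [0,1]
  have hpt : ∀ x ∈ Set.Icc (0:ℝ) 1, u x ^ 2 ≤ 2 * J := by
    intro x hx
    have hxint : IntervalIntegrable (fun t => 2 * u t * u' t) volume 0 x :=
      ContinuousOn.intervalIntegrable (by
        rw [Set.uIcc_of_le hx.1]
        exact ((continuousOn_const.mul
          (hu.mono (Set.Icc_subset_Icc le_rfl hx.2))).mul
          (hcont.mono (Set.Icc_subset_Icc le_rfl hx.2))))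
    have hftc : (∫ t in (0:ℝ)..x, 2 * u t * u' t) = u x ^ 2 - u 0 ^ 2 := by
      apply intervalIntegral.integral_eq_sub_of_hasDeriv_right_of_le hx.1
      · exact (hu.mono (Set.Icc_subset_Icc le_rfl hx.2)).pow 2
      · intro t ht
        have ht1 : t ∈ Set.Icc (0:ℝ) 1 := ⟨ht.1.le, ht.2.le.trans hx.2⟩
        have hmem : Set.Icc (0:ℝ) 1 ∈ nhdsWithin t (Set.Ioi t) :=
          Icc_mem_nhdsGT_of_mem ⟨ht1.1, lt_of_lt_of_le ht.2 hx.2⟩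
        have := ((hderiv t ht1).pow 2).mono_of_mem_nhdsWithin hmem
        simpa [mul_comm, mul_assoc, mul_left_comm, Pi.pow_def] using this
      · exact hxint
    have h1 : (∫ t in (0:ℝ)..x, 2 * u t * u' t)
        ≤ ∫ t in (0:ℝ)..x, 2 * (|u t| * |u' t|) := by
      apply intervalIntegral.integral_mono_on hx.1 hxint
      · exact ContinuousOn.intervalIntegrable (by
          rw [Set.uIcc_of_le hx.1]
          exact (continuousOn_const.mul
            (((hu.mono (Set.Icc_subset_Icc le_rfl hx.2)).abs.mul
              (hcont.mono (Set.Icc_subset_Icc le_rfl hx.2)).abs))))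
      · intro t _
        calc 2 * u t * u' t ≤ |2 * u t * u' t| := le_abs_self _
          _ = 2 * (|u t| * |u' t|) := by rw [abs_mul, abs_mul]; simp [mul_assoc]
    have h2 : (∫ t in (0:ℝ)..x, 2 * (|u t| * |u' t|))
        ≤ ∫ t in (0:ℝ)..1, 2 * (|u t| * |u' t|) := by
      apply intervalIntegral.integral_mono_interval le_rfl hx.1 hx.2
      · filter_upwards with t
        exact mul_nonneg (by norm_num) (mul_nonneg (abs_nonneg _) (abs_nonneg _))
      · exact hJint.const_mul 2
    have h3 : (∫ t in (0:ℝ)..1, 2 * (|u t| * |u' t|)) = 2 * J := by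
      rw [intervalIntegral.integral_const_mul]
    have := hftc ▸ (h1.trans h2)
    rw [h3] at this
    simpa [h0] using this
  -- pointwise : u x ^ 4 ≤ 4 * A * B
  have hpt4 : ∀ x ∈ Set.Icc (0:ℝ) 1, u x ^ 4 ≤ 4 * A * B := by
    intro x hx
    have h1 : u x ^ 4 = (u x ^ 2) ^ 2 := by ring
    have h2 : (u x ^ 2) ^ 2 ≤ (2 * J) ^ 2 :=
      pow_le_pow_left₀ (sq_nonneg _) (hpt x hx) 2
    nlinarith [hCS]
  have hu4 : IntervalIntegrable (fun x => u x ^ 4) volume 0 1 :=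
    ContinuousOn.intervalIntegrable (by rw [h01]; exact hu.pow 4)
  calc (∫ x in (0:ℝ)..1, u x ^ 4)
      ≤ ∫ _x in (0:ℝ)..1, 4 * A * B := by
        apply intervalIntegral.integral_mono_on zero_le_one hu4 intervalIntegrable_const
        intro x hx; exact hpt4 x hx
    _ = 4 * A * B := by simp
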